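/- Let G be a finite graph in which every vertex has degree 1, 4 or 5, and let G' be the induced subgraph of G on the set of vertices of degree 1 or 5. Then E(G) can be partitioned into two (possibly empty) parts E₁ and E₂ such that E₁ is a 1-regular part and E₂ is a 4-regular part if and only if G' has a perfect matching, i.e., a set M of edges of G' such that every vertex of G' is incident to exactly one edge of M. -/
import Mathlib


open SimpleGraph

variable {V : Type*}

/-- The degree of a vertex `v` in an edge part `E`: the number of edges of `E` incident to `v`. -/
noncomputable def partDeg (E : Set (Sym2 V)) (v : V) : ℕ :=
  {e ∈ E | v ∈ e}.ncard

/-- A part is a matching if no two of its edges share a vertex. -/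
def IsMatchingPart (E : Set (Sym2 V)) : Prop :=
  ∀ e ∈ E, ∀ f ∈ E, e ≠ f → ∀ v : V, v ∈ e → v ∉ f

/-- A part is locally irregular if the endpoints of each of its edges have distinct degrees. -/
def IsLocallyIrregularPart (E : Set (Sym2 V)) : Prop :=
  ∀ u v : V, s(u, v) ∈ E → partDeg E u ≠ partDeg E v

/-- A part is locally regular if the endpoints of each of its edges have equal degrees. -/
def IsLocallyRegularPart (E : Set (Sym2 V)) : Prop :=
  ∀ u v : V, s(u, v) ∈ E → partDeg E u = partDeg E v

/-- A part is regular if all vertices incident to one of its edges have the same degree `r ≥ 1`. -/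
def IsRegularPart (E : Set (Sym2 V)) : Prop :=
  ∃ r : ℕ, 1 ≤ r ∧ ∀ v : V, (∃ e ∈ E, v ∈ e) → partDeg E v = r

/-- A part is `r`-regular if every vertex incident to one of its edges has degree `r` in it. -/
def IsRegularPartOfDeg (r : ℕ) (E : Set (Sym2 V)) : Prop :=
  ∀ v : V, (∃ e ∈ E, v ∈ e) → partDeg E v = r

/-- A part is locally `k`-irregular if endpoint degrees of each edge differ by at least `k`. -/
def IsLocallyKIrregularPart (k : ℕ) (E : Set (Sym2 V)) : Prop :=
  ∀ u v : V, s(u, v) ∈ E → (k : ℤ) ≤ |(partDeg E u : ℤ) - (partDeg E v : ℤ)|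

/-- The maximum degree of a finite graph. -/
noncomputable def maxDeg [Fintype V] (G : SimpleGraph V) : ℕ :=
  Finset.univ.sup fun v => partDeg G.edgeSet v

lemma partDeg_union_disjoint {V : Type*} [Finite V] {A B : Set (Sym2 V)}
    (h : Disjoint A B) (v : V) :
    partDeg (A ∪ B) v = partDeg A v + partDeg B v := by
  unfold partDeg
  rw [show {e ∈ A ∪ B | v ∈ e} = {e ∈ A | v ∈ e} ∪ {e ∈ B | v ∈ e} by
    ext e; simp only [Set.mem_setOf_eq, Set.mem_union]; tauto]
  apply Set.ncard_union_eq _ (Set.toFinite _) (Set.toFinite _)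
  exact h.mono (fun e he => he.1) (fun e he => he.1)

lemma partDeg_eq_zero {V : Type*} {E : Set (Sym2 V)} {v : V}
    (h : ¬ ∃ e ∈ E, v ∈ e) : partDeg E v = 0 := by
  unfold partDeg
  convert Set.ncard_empty (Sym2 V)
  ext e
  simp only [Set.mem_setOf_eq, Set.mem_empty_iff_false, iff_false, not_and]
  intro he hv; exact h ⟨e, he, hv⟩

lemma partDeg_pos {V : Type*} [Finite V] {E : Set (Sym2 V)} {v : V}
    (h : ∃ e ∈ E, v ∈ e) : 1 ≤ partDeg E v := by
  obtain ⟨e, he, hv⟩ := h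
  exact (Set.ncard_pos (Set.toFinite _)).mpr ⟨e, he, hv⟩

/-- for a finite graph all of whose vertex degrees lie in {1, 4, 5}, with G' the
induced subgraph on the vertices of degree 1 or 5, the edge set of G decomposes into a
1-regular part and a 4-regular part iff G' has a perfect matching. -/
theorem stmt_10 {V : Type*} [Fintype V] (G : SimpleGraph V)
    (hdeg : ∀ v : V, partDeg G.edgeSet v ∈ ({1, 4, 5} : Set ℕ)) :
    (∃ E₁ E₂ : Set (Sym2 V),
        E₁ ∪ E₂ = G.edgeSet ∧ Disjoint E₁ E₂ ∧
        IsRegularPartOfDeg 1 E₁ ∧ IsRegularPartOfDeg 4 E₂) ↔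
      (∃ F : Set (Sym2 V),
        F ⊆ {e ∈ G.edgeSet | ∀ v : V, v ∈ e →
              (partDeg G.edgeSet v = 1 ∨ partDeg G.edgeSet v = 5)} ∧
        ∀ v : V, (partDeg G.edgeSet v = 1 ∨ partDeg G.edgeSet v = 5) →
          partDeg F v = 1) := by
  constructor
  · rintro ⟨E₁, E₂, hunion, hdisj, h1, h4⟩
    have hsplit : ∀ v : V, partDeg G.edgeSet v = partDeg E₁ v + partDeg E₂ v := by
      intro v; rw [← hunion]; exact partDeg_union_disjoint hdisj v
    have hE1deg : ∀ v : V, (∃ e ∈ E₁, v ∈ e) →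
        partDeg G.edgeSet v = 1 ∨ partDeg G.edgeSet v = 5 := by
      intro v hv
      have ha := h1 v hv
      rw [hsplit v, ha]
      by_cases hb : ∃ e ∈ E₂, v ∈ e
      · right; rw [h4 v hb]
      · left; rw [partDeg_eq_zero hb]
    refine ⟨E₁, ?_, ?_⟩
    · intro e he
      refine ⟨hunion ▸ Set.mem_union_left _ he, fun v hv => hE1deg v ⟨e, he, hv⟩⟩
    · intro v hv
      by_cases ha : ∃ e ∈ E₁, v ∈ e
      · exact h1 v ha
      · exfalso
        have ha0 : partDeg E₁ v = 0 := partDeg_eq_zero ha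
        have hb : partDeg E₂ v = 0 ∨ partDeg E₂ v = 4 := by
          by_cases hb : ∃ e ∈ E₂, v ∈ e
          · right; exact h4 v hb
          · left; exact partDeg_eq_zero hb
        have := hsplit v
        rcases hv with hv | hv <;> rcases hb with hb | hb <;> omega
  · rintro ⟨F, hFsub, hFmatch⟩
    have hFedge : F ⊆ G.edgeSet := fun e he => (hFsub he).1
    have hdisj : Disjoint F (G.edgeSet \ F) := Set.disjoint_sdiff_right
    have hunion : F ∪ (G.edgeSet \ F) = G.edgeSet := Set.union_diff_cancel hFedge
    have hsplit : ∀ v : V, partDeg G.edgeSet v = partDeg F v + partDeg (G.edgeSet \ F) v := by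
      intro v; conv_lhs => rw [← hunion]
      exact partDeg_union_disjoint hdisj v
    refine ⟨F, G.edgeSet \ F, hunion, hdisj, ?_, ?_⟩
    · intro v hv
      obtain ⟨e, he, hve⟩ := hv
      exact hFmatch v ((hFsub he).2 v hve)
    · intro v hv
      obtain ⟨e, he, hve⟩ := hv
      have hpos : 1 ≤ partDeg (G.edgeSet \ F) v := partDeg_pos ⟨e, he, hve⟩
      have hd := hdeg v
      simp only [Set.mem_insert_iff, Set.mem_singleton_iff] at hd
      have hs := hsplit v
      rcases hd with hd | hd | hd
      · have := hFmatch v (Or.inl hd); omega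
      · have hF0 : partDeg F v = 0 := by
          apply partDeg_eq_zero
          rintro ⟨f, hf, hvf⟩
          rcases (hFsub hf).2 v hvf with h | h <;> omega
        omega
      · have := hFmatch v (Or.inr hd); omega
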